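/- arXiv:1705.01596 — 2 statements merged into one kernel-verified Lean document; each statement's English description precedes it below -/
import Mathlib

section
/- For random variables Z_1, Z_2 on a finite alphabet with Z̃_i = f(Z_i) and with the marginal of (Z_1,Z̃_1) equal to that of (Z_2,Z̃_2): (1/2)[H(Z_1,Z_2) − H(Z̃_1,Z̃_2)] ≤ H(Z_1|Z̃_1), with equality if and only if Z_1 − Z̃_1 − Z̃_2 − Z_2 is a Markov chain. -/
open Real BigOperators Finset

/-- Shannon entropy of a probability mass function on a finite alphabet. -/
noncomputable def entropy {α : Type*} [Fintype α] (p : α → ℝ) : ℝ :=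
  ∑ x, Real.negMulLog (p x)

/-- `p` is a probability mass function. -/
def IsPMF {α : Type*} [Fintype α] (p : α → ℝ) : Prop :=
  (∀ x, 0 ≤ p x) ∧ ∑ x, p x = 1

/-- Distribution (pushforward pmf) of a random variable `X` on a finite
probability space with pmf `μ`. -/
noncomputable def pdist {Ω α : Type*} [Fintype Ω] [DecidableEq α]
    (μ : Ω → ℝ) (X : Ω → α) (a : α) : ℝ :=
  ∑ ω, if X ω = a then μ ω else 0

/-- Shannon entropy `H(X)` of a random variable. -/
noncomputable def Hm {Ω α : Type*} [Fintype Ω] [Fintype α] [DecidableEq α]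
    (μ : Ω → ℝ) (X : Ω → α) : ℝ :=
  entropy (pdist μ X)

/-- Conditional entropy `H(X|Y) = H(X,Y) - H(Y)`. -/
noncomputable def condEnt {Ω α β : Type*} [Fintype Ω] [Fintype α] [Fintype β]
    [DecidableEq α] [DecidableEq β] (μ : Ω → ℝ) (X : Ω → α) (Y : Ω → β) : ℝ :=
  Hm μ (fun ω => (X ω, Y ω)) - Hm μ Y

/-- Mutual information `I(X;Y) = H(X) + H(Y) - H(X,Y)`. -/
noncomputable def mutInfo {Ω α β : Type*} [Fintype Ω] [Fintype α] [Fintype β]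
    [DecidableEq α] [DecidableEq β] (μ : Ω → ℝ) (X : Ω → α) (Y : Ω → β) : ℝ :=
  Hm μ X + Hm μ Y - Hm μ (fun ω => (X ω, Y ω))

/-- Conditional mutual information `I(X;Y|W) = H(X|W) + H(Y|W) - H(X,Y|W)`. -/
noncomputable def condMutInfo {Ω α β γ : Type*} [Fintype Ω] [Fintype α] [Fintype β]
    [Fintype γ] [DecidableEq α] [DecidableEq β] [DecidableEq γ]
    (μ : Ω → ℝ) (X : Ω → α) (Y : Ω → β) (W : Ω → γ) : ℝ :=
  condEnt μ X W + condEnt μ Y W - condEnt μ (fun ω => (X ω, Y ω)) W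

/-- `Z_1 - Z̃_1 - Z̃_2 - Z_2` is a Markov chain (with `Z̃_i = f(Z_i)`):
`I(Z_1; (Z̃_2,Z_2) | Z̃_1) = 0` and `I((Z_1,Z̃_1); Z_2 | Z̃_2) = 0`. -/
def MarkovChain4 {Ω 𝒵 𝒵' : Type*} [Fintype Ω] [Fintype 𝒵] [Fintype 𝒵']
    [DecidableEq 𝒵] [DecidableEq 𝒵']
    (μ : Ω → ℝ) (Z1 Z2 : Ω → 𝒵) (f : 𝒵 → 𝒵') : Prop :=
  condMutInfo μ Z1 (fun ω => (f (Z2 ω), Z2 ω)) (fun ω => f (Z1 ω)) = 0 ∧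
  condMutInfo μ (fun ω => (Z1 ω, f (Z1 ω))) Z2 (fun ω => f (Z2 ω)) = 0

-- Lemma B
lemma pdist_comp {Ω α β : Type*} [Fintype Ω] [Fintype α] [DecidableEq α] [DecidableEq β]
    (μ : Ω → ℝ) (X : Ω → α) (g : α → β) (b : β) :
    pdist μ (fun ω => g (X ω)) b = ∑ a, if g a = b then pdist μ X a else 0 := by
  unfold pdist
  have h : ∀ a : α, (if g a = b then ∑ ω, if X ω = a then μ ω else 0 else 0)
      = ∑ ω, if X ω = a then (if g a = b then μ ω else 0) else 0 := by
    intro a; split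
    · rfl
    · simp_all
  simp only [h]
  rw [Finset.sum_comm]
  apply Finset.sum_congr rfl
  intro ω _
  rw [Finset.sum_ite_eq univ (X ω) (fun a => if g a = b then μ ω else 0)]
  simp

lemma pdist_nonneg {Ω α : Type*} [Fintype Ω] [DecidableEq α]
    {μ : Ω → ℝ} (hμ : ∀ ω, 0 ≤ μ ω) (X : Ω → α) (a : α) : 0 ≤ pdist μ X a := by
  apply Finset.sum_nonneg; intro ω _; split <;> simp [hμ ω]

lemma sum_pdist {Ω α : Type*} [Fintype Ω] [Fintype α] [DecidableEq α]
    (μ : Ω → ℝ) (X : Ω → α) : ∑ a, pdist μ X a = ∑ ω, μ ω := by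
  unfold pdist
  rw [Finset.sum_comm]
  exact Finset.sum_congr rfl fun ω _ => by simp

lemma Hm_comp_inj {Ω α β : Type*} [Fintype Ω] [Fintype α] [Fintype β]
    [DecidableEq α] [DecidableEq β] (μ : Ω → ℝ) (X : Ω → α) {u : α → β}
    (hu : Function.Injective u) :
    Hm μ (fun ω => u (X ω)) = Hm μ X := by
  unfold Hm entropy
  rw [← Finset.sum_subset (Finset.subset_univ (univ.image u))
      (f := fun b => Real.negMulLog (pdist μ (fun ω => u (X ω)) b))]
  swap
  · intro b _ hb
    have : pdist μ (fun ω => u (X ω)) b = 0 := by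
      unfold pdist
      apply Finset.sum_eq_zero
      intro ω _
      have : u (X ω) ≠ b := by
        intro h; exact hb (Finset.mem_image.2 ⟨X ω, Finset.mem_univ _, h⟩)
      simp [this]
    simp [this]
  · rw [Finset.sum_image (by intro x _ y _ h; exact hu h)]
    apply Finset.sum_congr rfl
    intro a _
    congr 1
    unfold pdist
    apply Finset.sum_congr rfl
    intro ω _
    congr 1
    simp [hu.eq_iff]

lemma gibbs {ι : Type*} [Fintype ι] (f g : ι → ℝ) (hf : ∀ i, 0 ≤ f i)
    (hg : ∀ i, 0 ≤ g i) (hfg : ∀ i, f i ≠ 0 → g i ≠ 0)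
    (hsum : ∑ i, g i ≤ ∑ i, f i) :
    0 ≤ ∑ i, (if f i = 0 then 0 else f i * (Real.log (f i) - Real.log (g i))) := by
  have key : ∀ i, f i - g i ≤ (if f i = 0 then 0 else f i * (Real.log (f i) - Real.log (g i))) := by
    intro i
    split
    · rename_i h; rw [h]; simp [hg i]
    · rename_i h
      have hfi : 0 < f i := lt_of_le_of_ne (hf i) (Ne.symm h)
      have hgi : 0 < g i := lt_of_le_of_ne (hg i) (Ne.symm (hfg i h))
      have hlog : Real.log (g i / f i) ≤ g i / f i - 1 :=
        Real.log_le_sub_one_of_pos (by positivity)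
      rw [Real.log_div (ne_of_gt hgi) (ne_of_gt hfi)] at hlog
      have := mul_le_mul_of_nonneg_left hlog (le_of_lt hfi)
      rw [mul_sub, mul_sub, mul_div_cancel₀ _ (ne_of_gt hfi), mul_one] at this
      nlinarith
  calc (0:ℝ) = ∑ i, f i - ∑ i, g i + (∑ i, g i - ∑ i, f i) := by ring
  _ ≤ ∑ i, (if f i = 0 then 0 else f i * (Real.log (f i) - Real.log (g i))) := by
      have := Finset.sum_le_sum (fun i (_ : i ∈ univ) => key i)
      rw [Finset.sum_sub_distrib] at this
      linarith

section Triple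
variable {α β γ : Type*} [Fintype α] [Fintype β] [Fintype γ]

lemma sum_triple {M : Type*} [AddCommMonoid M] (F : α × β × γ → M) :
    ∑ t, F t = ∑ c, ∑ a, ∑ b, F (a, b, c) := by
  rw [Fintype.sum_prod_type]
  have : ∀ a : α, ∑ y : β × γ, F (a, y) = ∑ c, ∑ b, F (a, b, c) := by
    intro a; rw [Fintype.sum_prod_type]; exact Finset.sum_comm
  simp only [this]
  exact Finset.sum_comm

lemma sum_acb {M : Type*} [AddCommMonoid M] (F : α → β → γ → M) :
    ∑ ac : α × γ, ∑ b, F ac.1 b ac.2 = ∑ t : α × β × γ, F t.1 t.2.1 t.2.2 := by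
  rw [sum_triple (fun t => F t.1 t.2.1 t.2.2), Fintype.sum_prod_type, Finset.sum_comm]

lemma sum_bca {M : Type*} [AddCommMonoid M] (F : α → β → γ → M) :
    ∑ bc : β × γ, ∑ a, F a bc.1 bc.2 = ∑ t : α × β × γ, F t.1 t.2.1 t.2.2 := by
  rw [sum_triple (fun t => F t.1 t.2.1 t.2.2), Fintype.sum_prod_type, Finset.sum_comm]
  exact Finset.sum_congr rfl fun c _ => Finset.sum_comm


lemma sum_cab {M : Type*} [AddCommMonoid M] (F : α → β → γ → M) :
    ∑ c, ∑ ab : α × β, F ab.1 ab.2 c = ∑ t : α × β × γ, F t.1 t.2.1 t.2.2 := by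
  rw [sum_triple (fun t => F t.1 t.2.1 t.2.2)]
  exact Finset.sum_congr rfl fun c _ => Fintype.sum_prod_type _

end Triple

lemma negMulLog_sum_pull {ι : Type*} [Fintype ι] (q : ι → ℝ) :
    Real.negMulLog (∑ i, q i) = ∑ i, (-(q i * Real.log (∑ j, q j))) := by
  rw [Real.negMulLog, neg_mul, Finset.sum_mul, Finset.sum_neg_distrib]

lemma cmi_abstract {α β γ : Type*} [Fintype α] [Fintype β] [Fintype γ]
    (p : α × β × γ → ℝ) (hp : ∀ t, 0 ≤ p t) (hs : ∑ t, p t = 1) :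
    0 ≤ (∑ ac : α × γ, Real.negMulLog (∑ b, p (ac.1, b, ac.2)))
      + (∑ bc : β × γ, Real.negMulLog (∑ a, p (a, bc.1, bc.2)))
      - (∑ c : γ, Real.negMulLog (∑ a, ∑ b, p (a, b, c)))
      - (∑ t, Real.negMulLog (p t)) := by
  set pXW : α → γ → ℝ := fun a c => ∑ b, p (a, b, c) with hpXW
  set pYW : β → γ → ℝ := fun b c => ∑ a, p (a, b, c) with hpYW
  set pW : γ → ℝ := fun c => ∑ a, ∑ b, p (a, b, c) with hpW
  -- pointwise bounds
  have hpXW_le : ∀ t : α × β × γ, p t ≤ pXW t.1 t.2.2 := by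
    rintro ⟨a, b, c⟩
    exact Finset.single_le_sum (fun b' _ => hp (a, b', c)) (Finset.mem_univ b)
  have hpYW_le : ∀ t : α × β × γ, p t ≤ pYW t.2.1 t.2.2 := by
    rintro ⟨a, b, c⟩
    exact Finset.single_le_sum (fun a' _ => hp (a', b, c)) (Finset.mem_univ a)
  have hpXW_nonneg : ∀ a c, 0 ≤ pXW a c := fun a c =>
    Finset.sum_nonneg fun b _ => hp _
  have hpYW_nonneg : ∀ b c, 0 ≤ pYW b c := fun b c =>
    Finset.sum_nonneg fun a _ => hp _
  have hpW_nonneg : ∀ c, 0 ≤ pW c := fun c =>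
    Finset.sum_nonneg fun a _ => hpXW_nonneg a c
  have hpXW_le_pW : ∀ a c, pXW a c ≤ pW c := by
    intro a c
    exact Finset.single_le_sum (fun a' _ => hpXW_nonneg a' c) (Finset.mem_univ a)
  -- marginal sums over the triple
  have hXWsum : ∀ c, ∑ a, pXW a c = pW c := fun c => rfl
  have hYWsum : ∀ c, ∑ b, pYW b c = pW c := fun c => Finset.sum_comm
  have hWsum : ∑ c, pW c = 1 := by
    rw [← hs, sum_triple p]
  -- the "independent coupling" q
  set G : α × β × γ → ℝ := fun t => pXW t.1 t.2.2 * pYW t.2.1 t.2.2 / pW t.2.2 with hG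
  have hG_nonneg : ∀ t, 0 ≤ G t := by
    rintro ⟨a, b, c⟩
    have := hpXW_nonneg a c
    have := hpYW_nonneg b c
    have := hpW_nonneg c
    positivity
  have hG_pos : ∀ t, 0 < p t → 0 < G t := by
    rintro ⟨a, b, c⟩ hpt
    have h1 : 0 < pXW a c := lt_of_lt_of_le hpt (hpXW_le (a, b, c))
    have h2 : 0 < pYW b c := lt_of_lt_of_le hpt (hpYW_le (a, b, c))
    have h3 : 0 < pW c := lt_of_lt_of_le h1 (hpXW_le_pW a c)
    exact div_pos (mul_pos h1 h2) h3
  -- sum of G is at most 1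
  have hGsum : ∑ t, G t ≤ 1 := by
    rw [sum_triple G]
    have hc : ∀ c, ∑ a, ∑ b, G (a, b, c) ≤ pW c := by
      intro c
      have h' : (∑ a, pXW a c) * (∑ b, pYW b c) / pW c
          = ∑ a, ∑ b, pXW a c * pYW b c / pW c := by
        rw [Finset.sum_mul_sum, Finset.sum_div]
        exact Finset.sum_congr rfl fun a _ => Finset.sum_div _ _ _
      have h'' : ∑ a, ∑ b, G (a, b, c) = pW c * pW c / pW c := by
        have : ∀ a b, G (a, b, c) = pXW a c * pYW b c / pW c := fun a b => rfl
        simp only [this]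
        rw [← h', hXWsum, hYWsum]
      rw [h'']
      rcases eq_or_lt_of_le (hpW_nonneg c) with h | h
      · rw [← h]; simp
      · rw [mul_div_assoc, div_self (ne_of_gt h), mul_one]
    calc ∑ c, ∑ a, ∑ b, G (a, b, c) ≤ ∑ c, pW c :=
          Finset.sum_le_sum fun c _ => hc c
      _ = 1 := hWsum
  -- rewrite the entropy combination as a relative-entropy-like sum
  have key : (∑ ac : α × γ, Real.negMulLog (∑ b, p (ac.1, b, ac.2)))
      + (∑ bc : β × γ, Real.negMulLog (∑ a, p (a, bc.1, bc.2)))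
      - (∑ c : γ, Real.negMulLog (∑ a, ∑ b, p (a, b, c)))
      - (∑ t, Real.negMulLog (p t))
      = ∑ t, (if p t = 0 then 0 else p t * (Real.log (p t) - Real.log (G t))) := by
    have e1 : ∑ ac : α × γ, Real.negMulLog (∑ b, p (ac.1, b, ac.2))
        = ∑ t : α × β × γ, (-(p t * Real.log (pXW t.1 t.2.2))) := by
      rw [← sum_acb (fun a b c => (-(p (a, b, c) * Real.log (pXW a c))))]
      exact Finset.sum_congr rfl fun ac _ => negMulLog_sum_pull _
    have e2 : ∑ bc : β × γ, Real.negMulLog (∑ a, p (a, bc.1, bc.2))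
        = ∑ t : α × β × γ, (-(p t * Real.log (pYW t.2.1 t.2.2))) := by
      rw [← sum_bca (fun a b c => (-(p (a, b, c) * Real.log (pYW b c))))]
      exact Finset.sum_congr rfl fun bc _ => negMulLog_sum_pull _
    have e3 : ∑ c : γ, Real.negMulLog (∑ a, ∑ b, p (a, b, c))
        = ∑ t : α × β × γ, (-(p t * Real.log (pW t.2.2))) := by
      rw [← sum_cab (fun a b c => (-(p (a, b, c) * Real.log (pW c))))]
      apply Finset.sum_congr rfl
      intro c _
      have : (∑ a, ∑ b, p (a, b, c)) = ∑ ab : α × β, p (ab.1, ab.2, c) :=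
        (Fintype.sum_prod_type (fun ab : α × β => p (ab.1, ab.2, c))).symm
      rw [this, negMulLog_sum_pull, ← this]
    rw [e1, e2, e3]
    rw [← Finset.sum_add_distrib, ← Finset.sum_sub_distrib, ← Finset.sum_sub_distrib]
    apply Finset.sum_congr rfl
    intro t _
    by_cases hpt : p t = 0
    · simp [hpt, Real.negMulLog]
    · have hpt' : 0 < p t := lt_of_le_of_ne (hp t) (Ne.symm hpt)
      have h1 : 0 < pXW t.1 t.2.2 := lt_of_lt_of_le hpt' (hpXW_le t)
      have h2 : 0 < pYW t.2.1 t.2.2 := lt_of_lt_of_le hpt' (hpYW_le t)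
      have h3 : 0 < pW t.2.2 := lt_of_lt_of_le h1 (hpXW_le_pW t.1 t.2.2)
      have hlog : Real.log (G t)
          = Real.log (pXW t.1 t.2.2) + Real.log (pYW t.2.1 t.2.2) - Real.log (pW t.2.2) := by
        have : G t = pXW t.1 t.2.2 * pYW t.2.1 t.2.2 / pW t.2.2 := rfl
        rw [this, Real.log_div (by positivity) (ne_of_gt h3),
          Real.log_mul (ne_of_gt h1) (ne_of_gt h2)]
      rw [if_neg hpt, Real.negMulLog, hlog]
      ring
  rw [key]
  exact gibbs p G hp hG_nonneg
    (fun t ht => ne_of_gt (hG_pos t (lt_of_le_of_ne (hp t) (Ne.symm ht))))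
    (by rw [hs]; exact hGsum)

section Helpers
variable {α β γ : Type*} [Fintype α] [Fintype β] [Fintype γ]
  [DecidableEq α] [DecidableEq β] [DecidableEq γ]

lemma sum_ite_13 (p : α × β × γ → ℝ) (a : α) (c : γ) :
    (∑ t : α × β × γ, if (t.1, t.2.2) = (a, c) then p t else 0) = ∑ b, p (a, b, c) := by
  rw [sum_triple (fun t => if (t.1, t.2.2) = (a, c) then p t else 0)]
  rw [Finset.sum_eq_single c]
  · rw [Finset.sum_eq_single a]
    · simp
    · intro a' _ ha; apply Finset.sum_eq_zero; intro b _
      simp [Prod.mk.injEq, ha]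
    · simp
  · intro c' _ hc
    apply Finset.sum_eq_zero; intro a' _; apply Finset.sum_eq_zero; intro b _
    simp [Prod.mk.injEq, hc]
  · simp

lemma sum_ite_23 (p : α × β × γ → ℝ) (b : β) (c : γ) :
    (∑ t : α × β × γ, if (t.2.1, t.2.2) = (b, c) then p t else 0) = ∑ a, p (a, b, c) := by
  rw [sum_triple (fun t => if (t.2.1, t.2.2) = (b, c) then p t else 0)]
  rw [Finset.sum_eq_single c]
  · apply Finset.sum_congr rfl; intro a' _
    rw [Finset.sum_eq_single b]
    · simp
    · intro b' _ hb; simp [Prod.mk.injEq, hb]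
    · simp
  · intro c' _ hc
    apply Finset.sum_eq_zero; intro a' _; apply Finset.sum_eq_zero; intro b' _
    simp [Prod.mk.injEq, hc]
  · simp

lemma sum_ite_3 (p : α × β × γ → ℝ) (c : γ) :
    (∑ t : α × β × γ, if t.2.2 = c then p t else 0) = ∑ a, ∑ b, p (a, b, c) := by
  rw [sum_triple (fun t => if t.2.2 = c then p t else 0)]
  rw [Finset.sum_eq_single c]
  · simp
  · intro c' _ hc
    apply Finset.sum_eq_zero; intro a' _; apply Finset.sum_eq_zero; intro b' _
    simp [hc]
  · simp

end Helpers

lemma condMutInfo_nonneg {Ω α β γ : Type*} [Fintype Ω] [Fintype α] [Fintype β]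
    [Fintype γ] [DecidableEq α] [DecidableEq β] [DecidableEq γ]
    (μ : Ω → ℝ) (hμ : IsPMF μ) (X : Ω → α) (Y : Ω → β) (W : Ω → γ) :
    0 ≤ condMutInfo μ X Y W := by
  set p : α × β × γ → ℝ := pdist μ (fun ω => (X ω, Y ω, W ω)) with hpdef
  have hp : ∀ t, 0 ≤ p t := fun t => pdist_nonneg hμ.1 _ t
  have hs : ∑ t, p t = 1 := by rw [hpdef, sum_pdist]; exact hμ.2
  have hXYW : Hm μ (fun ω => ((X ω, Y ω), W ω)) = ∑ t, Real.negMulLog (p t) := by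
    have : Hm μ (fun ω => ((X ω, Y ω), W ω))
        = Hm μ (fun ω => (X ω, Y ω, W ω)) := by
      exact Hm_comp_inj μ (fun ω => (X ω, Y ω, W ω))
        (u := fun t : α × β × γ => ((t.1, t.2.1), t.2.2))
        (by
          rintro ⟨a, b, c⟩ ⟨a', b', c'⟩ h
          simp only [Prod.mk.injEq] at h ⊢
          tauto)
    rw [this]; rfl
  have hXW : Hm μ (fun ω => (X ω, W ω))
      = ∑ ac : α × γ, Real.negMulLog (∑ b, p (ac.1, b, ac.2)) := by
    unfold Hm entropy
    apply Finset.sum_congr rfl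
    rintro ⟨a, c⟩ _
    congr 1
    have : pdist μ (fun ω => (X ω, W ω)) (a, c)
        = pdist μ (fun ω => (fun t : α × β × γ => (t.1, t.2.2)) (X ω, Y ω, W ω)) (a, c) := rfl
    rw [this, pdist_comp μ (fun ω => (X ω, Y ω, W ω)) (fun t => (t.1, t.2.2)) (a, c)]
    exact sum_ite_13 p a c
  have hYW : Hm μ (fun ω => (Y ω, W ω))
      = ∑ bc : β × γ, Real.negMulLog (∑ a, p (a, bc.1, bc.2)) := by
    unfold Hm entropy
    apply Finset.sum_congr rfl
    rintro ⟨b, c⟩ _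
    congr 1
    have : pdist μ (fun ω => (Y ω, W ω)) (b, c)
        = pdist μ (fun ω => (fun t : α × β × γ => (t.2.1, t.2.2)) (X ω, Y ω, W ω)) (b, c) := rfl
    rw [this, pdist_comp μ (fun ω => (X ω, Y ω, W ω)) (fun t => (t.2.1, t.2.2)) (b, c)]
    exact sum_ite_23 p b c
  have hW : Hm μ W = ∑ c, Real.negMulLog (∑ a, ∑ b, p (a, b, c)) := by
    unfold Hm entropy
    apply Finset.sum_congr rfl
    intro c _
    congr 1
    have : pdist μ W c
        = pdist μ (fun ω => (fun t : α × β × γ => t.2.2) (X ω, Y ω, W ω)) c := rfl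
    rw [this, pdist_comp μ (fun ω => (X ω, Y ω, W ω)) (fun t => t.2.2) c]
    exact sum_ite_3 p c
  have habs := cmi_abstract p hp hs
  unfold condMutInfo condEnt
  rw [hXYW, hXW, hYW, hW] at *
  linarith

lemma inj_of_proj {A B : Type*} (u : A → B) (pr : B → A) (h : ∀ a, pr (u a) = a) :
    Function.Injective u := fun x y hxy => by rw [← h x, ← h y, hxy]

/-- with `Z̃_i = f(Z_i)` and the law of `(Z_1,Z̃_1)` equal to that
of `(Z_2,Z̃_2)`, `(1/2)[H(Z_1,Z_2) - H(Z̃_1,Z̃_2)] ≤ H(Z_1|Z̃_1)`, with equality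
iff `Z_1 - Z̃_1 - Z̃_2 - Z_2` is a Markov chain. -/
theorem stmt5 {Ω 𝒵 𝒵' : Type*} [Fintype Ω] [Fintype 𝒵] [Fintype 𝒵']
    [DecidableEq 𝒵] [DecidableEq 𝒵']
    (μ : Ω → ℝ) (hμ : IsPMF μ) (Z1 Z2 : Ω → 𝒵) (f : 𝒵 → 𝒵')
    (hmarg : pdist μ (fun ω => (Z1 ω, f (Z1 ω)))
      = pdist μ (fun ω => (Z2 ω, f (Z2 ω)))) :
    (1 / 2) * (Hm μ (fun ω => (Z1 ω, Z2 ω))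
        - Hm μ (fun ω => (f (Z1 ω), f (Z2 ω))))
      ≤ condEnt μ Z1 (fun ω => f (Z1 ω)) ∧
    ((1 / 2) * (Hm μ (fun ω => (Z1 ω, Z2 ω))
        - Hm μ (fun ω => (f (Z1 ω), f (Z2 ω))))
      = condEnt μ Z1 (fun ω => f (Z1 ω)) ↔ MarkovChain4 μ Z1 Z2 f) := by
  set h12 := Hm μ (fun ω => (Z1 ω, Z2 ω)) with e_h12
  set ht12 := Hm μ (fun ω => (f (Z1 ω), f (Z2 ω))) with e_ht12
  set h1 := Hm μ Z1 with e_h1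
  set h2 := Hm μ Z2 with e_h2
  set ht1 := Hm μ (fun ω => f (Z1 ω)) with e_ht1
  set ht2 := Hm μ (fun ω => f (Z2 ω)) with e_ht2
  set h1t2 := Hm μ (fun ω => (Z1 ω, f (Z2 ω))) with e_h1t2
  set h2t1 := Hm μ (fun ω => (Z2 ω, f (Z1 ω))) with e_h2t1
  -- collapses
  have A1 : Hm μ (fun ω => (Z1 ω, f (Z1 ω))) = h1 :=
    Hm_comp_inj μ Z1 (u := fun a => (a, f a)) (inj_of_proj _ Prod.fst fun a => rfl)
  have A2 : Hm μ (fun ω => (Z2 ω, f (Z2 ω))) = h2 :=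
    Hm_comp_inj μ Z2 (u := fun a => (a, f a)) (inj_of_proj _ Prod.fst fun a => rfl)
  have A3 : Hm μ (fun ω => ((Z1 ω, f (Z2 ω)), f (Z1 ω))) = h1t2 :=
    Hm_comp_inj μ (fun ω => (Z1 ω, f (Z2 ω)))
      (u := fun x : 𝒵 × 𝒵' => (x, f x.1)) (inj_of_proj _ Prod.fst fun x => rfl)
  have A4 : Hm μ (fun ω => (f (Z2 ω), f (Z1 ω))) = ht12 :=
    Hm_comp_inj μ (fun ω => (f (Z1 ω), f (Z2 ω)))
      (u := fun x : 𝒵' × 𝒵' => (x.2, x.1)) (inj_of_proj _ (fun y => (y.2, y.1)) fun x => rfl)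
  have A5 : Hm μ (fun ω => ((Z1 ω, Z2 ω), f (Z2 ω))) = h12 :=
    Hm_comp_inj μ (fun ω => (Z1 ω, Z2 ω))
      (u := fun x : 𝒵 × 𝒵 => (x, f x.2)) (inj_of_proj _ Prod.fst fun x => rfl)
  have A6 : Hm μ (fun ω => ((f (Z2 ω), Z2 ω), f (Z1 ω))) = h2t1 :=
    Hm_comp_inj μ (fun ω => (Z2 ω, f (Z1 ω)))
      (u := fun x : 𝒵 × 𝒵' => ((f x.1, x.1), x.2))
      (inj_of_proj _ (fun y => (y.1.2, y.2)) fun x => rfl)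
  have A7 : Hm μ (fun ω => ((Z1 ω, (f (Z2 ω), Z2 ω)), f (Z1 ω))) = h12 :=
    Hm_comp_inj μ (fun ω => (Z1 ω, Z2 ω))
      (u := fun x : 𝒵 × 𝒵 => ((x.1, (f x.2, x.2)), f x.1))
      (inj_of_proj _ (fun y => (y.1.1, y.1.2.2)) fun x => rfl)
  have A8 : Hm μ (fun ω => ((Z1 ω, f (Z1 ω)), f (Z2 ω))) = h1t2 :=
    Hm_comp_inj μ (fun ω => (Z1 ω, f (Z2 ω)))
      (u := fun x : 𝒵 × 𝒵' => ((x.1, f x.1), x.2))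
      (inj_of_proj _ (fun y => (y.1.1, y.2)) fun x => rfl)
  have A9 : Hm μ (fun ω => (((Z1 ω, f (Z1 ω)), Z2 ω), f (Z2 ω))) = h12 :=
    Hm_comp_inj μ (fun ω => (Z1 ω, Z2 ω))
      (u := fun x : 𝒵 × 𝒵 => (((x.1, f x.1), x.2), f x.2))
      (inj_of_proj _ (fun y => (y.1.1.1, y.1.2)) fun x => rfl)
  have A13 : Hm μ (fun ω => ((f (Z1 ω), Z2 ω), f (Z2 ω))) = h2t1 :=
    Hm_comp_inj μ (fun ω => (Z2 ω, f (Z1 ω)))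
      (u := fun x : 𝒵 × 𝒵' => ((x.2, x.1), f x.1))
      (inj_of_proj _ (fun y => (y.1.2, y.1.1)) fun x => rfl)
  have A10 : Hm μ (fun ω => (Z1 ω, (f (Z1 ω), f (Z2 ω)))) = h1t2 :=
    Hm_comp_inj μ (fun ω => (Z1 ω, f (Z2 ω)))
      (u := fun x : 𝒵 × 𝒵' => (x.1, (f x.1, x.2)))
      (inj_of_proj _ (fun y => (y.1, y.2.2)) fun x => rfl)
  have A11 : Hm μ (fun ω => (Z2 ω, (f (Z1 ω), f (Z2 ω)))) = h2t1 :=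
    Hm_comp_inj μ (fun ω => (Z2 ω, f (Z1 ω)))
      (u := fun x : 𝒵 × 𝒵' => (x.1, (x.2, f x.1)))
      (inj_of_proj _ (fun y => (y.1, y.2.1)) fun x => rfl)
  have A12 : Hm μ (fun ω => ((Z1 ω, Z2 ω), (f (Z1 ω), f (Z2 ω)))) = h12 :=
    Hm_comp_inj μ (fun ω => (Z1 ω, Z2 ω))
      (u := fun x : 𝒵 × 𝒵 => (x, (f x.1, f x.2)))
      (inj_of_proj _ Prod.fst fun x => rfl)
  -- equal marginals
  have hz : h1 = h2 := by
    rw [e_h1, e_h2]; unfold Hm; congr 1; funext a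
    calc pdist μ Z1 a
        = ∑ x : 𝒵 × 𝒵', if x.1 = a then pdist μ (fun ω => (Z1 ω, f (Z1 ω))) x else 0 :=
          pdist_comp μ (fun ω => (Z1 ω, f (Z1 ω))) (fun x => x.1) a
      _ = ∑ x : 𝒵 × 𝒵', if x.1 = a then pdist μ (fun ω => (Z2 ω, f (Z2 ω))) x else 0 := by
          rw [hmarg]
      _ = pdist μ Z2 a :=
          (pdist_comp μ (fun ω => (Z2 ω, f (Z2 ω))) (fun x => x.1) a).symm
  have hzt : ht1 = ht2 := by
    rw [e_ht1, e_ht2]; unfold Hm; congr 1; funext b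
    calc pdist μ (fun ω => f (Z1 ω)) b
        = ∑ x : 𝒵 × 𝒵', if x.2 = b then pdist μ (fun ω => (Z1 ω, f (Z1 ω))) x else 0 :=
          pdist_comp μ (fun ω => (Z1 ω, f (Z1 ω))) (fun x => x.2) b
      _ = ∑ x : 𝒵 × 𝒵', if x.2 = b then pdist μ (fun ω => (Z2 ω, f (Z2 ω))) x else 0 := by
          rw [hmarg]
      _ = pdist μ (fun ω => f (Z2 ω)) b :=
          (pdist_comp μ (fun ω => (Z2 ω, f (Z2 ω))) (fun x => x.2) b).symm
  -- conditional mutual informations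
  have eT2 : condMutInfo μ Z1 (fun ω => f (Z2 ω)) (fun ω => f (Z1 ω))
      = h1 + ht12 - ht1 - h1t2 := by
    unfold condMutInfo condEnt; rw [A1, A4, A3]; ring
  have eT3 : condMutInfo μ Z1 Z2 (fun ω => f (Z2 ω))
      = h1t2 + h2 - ht2 - h12 := by
    unfold condMutInfo condEnt; rw [A2, A5]; ring
  have eT4 : condMutInfo μ (fun ω => f (Z1 ω)) Z2 (fun ω => f (Z2 ω))
      = ht12 + h2 - ht2 - h2t1 := by
    unfold condMutInfo condEnt; rw [A2, A13]; ring
  have eM1 : condMutInfo μ Z1 (fun ω => (f (Z2 ω), Z2 ω)) (fun ω => f (Z1 ω))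
      = h1 + h2t1 - ht1 - h12 := by
    unfold condMutInfo condEnt; rw [A1, A6, A7]; ring
  have eM2 : condMutInfo μ (fun ω => (Z1 ω, f (Z1 ω))) Z2 (fun ω => f (Z2 ω))
      = h1t2 + h2 - ht2 - h12 := by
    unfold condMutInfo condEnt; rw [A2, A8, A9]; ring
  have n2 := condMutInfo_nonneg μ hμ Z1 (fun ω => f (Z2 ω)) (fun ω => f (Z1 ω))
  have n3 := condMutInfo_nonneg μ hμ Z1 Z2 (fun ω => f (Z2 ω))
  have n4 := condMutInfo_nonneg μ hμ (fun ω => f (Z1 ω)) Z2 (fun ω => f (Z2 ω))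
  have nM1 := condMutInfo_nonneg μ hμ Z1 (fun ω => (f (Z2 ω), Z2 ω)) (fun ω => f (Z1 ω))
  have eT6 : condMutInfo μ Z1 Z2 (fun ω => (f (Z1 ω), f (Z2 ω)))
      = h1t2 + h2t1 - ht12 - h12 := by
    unfold condMutInfo condEnt; rw [A10, A11, A12]; ring
  have n6 := condMutInfo_nonneg μ hμ Z1 Z2 (fun ω => (f (Z1 ω), f (Z2 ω)))
  rw [eT2] at n2; rw [eT3] at n3; rw [eT4] at n4; rw [eM1] at nM1; rw [eT6] at n6
  have eCE : condEnt μ Z1 (fun ω => f (Z1 ω)) = h1 - ht1 := by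
    unfold condEnt; rw [A1]
  rw [eCE]
  unfold MarkovChain4
  rw [eM1, eM2]
  constructor
  · linarith
  · constructor
    · intro heq
      constructor <;> linarith
    · rintro ⟨m1, m2⟩
      linarith
end

section
/- Let X be uniform on 𝒬, Z ∈ 𝒬 ∪ {e} independent of X with ε = P(Z=e), and Y = h(X,Z)·1{Z≠e} + e·1{Z=e} with h satisfying S-I and S-II. Define Z̃ = 0 if Z ≠ e and Z̃ = e if Z = e. Then I(X;Y) = (1−ε)·log q − H(Z|Z̃). -/
open Real BigOperators Finset

/-- Joint pmf of input distribution `p` fed through a channel `W`. -/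
noncomputable def jointOf {𝒳 𝒴 : Type*} (p : 𝒳 → ℝ) (W : 𝒳 → 𝒴 → ℝ) :
    𝒳 × 𝒴 → ℝ := fun xy => p xy.1 * W xy.1 xy.2

/-- First marginal of a joint pmf. -/
noncomputable def marg1 {𝒳 𝒴 : Type*} [Fintype 𝒴] (j : 𝒳 × 𝒴 → ℝ) : 𝒳 → ℝ :=
  fun x => ∑ y, j (x, y)

/-- Second marginal of a joint pmf. -/
noncomputable def marg2 {𝒳 𝒴 : Type*} [Fintype 𝒳] (j : 𝒳 × 𝒴 → ℝ) : 𝒴 → ℝ :=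
  fun y => ∑ x, j (x, y)

/-- Mutual information of a joint pmf. -/
noncomputable def mutInfoJ {𝒳 𝒴 : Type*} [Fintype 𝒳] [Fintype 𝒴]
    (j : 𝒳 × 𝒴 → ℝ) : ℝ :=
  entropy (marg1 j) + entropy (marg2 j) - entropy j

/-- Transition probabilities of the single-use noise-erasure channel
`Y = h(X,Z)` if `Z ≠ e`, `Y = e` if `Z = e`, where the erasure symbol `e`
is modeled by `none` and the noise has pmf `pZ`. -/
noncomputable def necW {q : ℕ} (h : Fin q → Fin q → Fin q)
    (pZ : Option (Fin q) → ℝ) : Fin q → Option (Fin q) → ℝ :=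
  fun x y => ∑ z : Option (Fin q), if Option.map (h x) z = y then pZ z else 0

/-- Joint pmf of the noise `Z` and the auxiliary erasure indicator
`Z̃ = 1{Z = e}` (`true` meaning erasure). -/
noncomputable def jointTilde {q : ℕ} (pZ : Option (Fin q) → ℝ) :
    Option (Fin q) × Bool → ℝ :=
  fun p => if p.1.isNone = p.2 then pZ p.1 else 0

private lemma scale_negMulLog {q : ℕ} (hq : 0 < q) (t : ℝ) :
    (q : ℝ) * Real.negMulLog ((q : ℝ)⁻¹ * t) = Real.negMulLog t + t * Real.log q := by
  have hq0 : (q : ℝ) ≠ 0 := by positivity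
  rcases eq_or_ne t 0 with rfl | htne
  · simp [Real.negMulLog]
  · unfold Real.negMulLog
    rw [show (q : ℝ)⁻¹ * t = t / q by ring, Real.log_div htne hq0]
    field_simp
    ring

/-- for the single-use NEC satisfying S-I and S-II with uniform
input, `I(X;Y) = (1-ε) log q - H(Z|Z̃)` where `ε = P(Z = e)` and `Z̃` is the
erasure indicator of `Z`. -/
theorem stmt12 {q : ℕ} (hq : 0 < q) (h : Fin q → Fin q → Fin q)
    (pZ : Option (Fin q) → ℝ) (hpZ : IsPMF pZ)
    (hS1 : ∀ x, Function.Bijective (h x))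
    (ht : Fin q → Fin q → Fin q) (hinv : ∀ x y, h x (ht x y) = y)
    (hS2 : ∀ y, Function.Injective (fun x => ht x y)) :
    mutInfoJ (jointOf (fun _ : Fin q => (q : ℝ)⁻¹) (necW h pZ))
      = (1 - pZ none) * Real.log (q : ℝ)
        - (entropy (jointTilde pZ) - entropy (marg2 (jointTilde pZ))) := by
  have hq0 : (q : ℝ) ≠ 0 := by positivity
  set ε := pZ none with hε
  set s := ∑ a, pZ (some a) with hs
  set T := ∑ a, Real.negMulLog (pZ (some a)) with hT
  set L := Real.log (q : ℝ) with hL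
  -- sum of pmf
  have hsum1 : ε + s = 1 := by
    have := hpZ.2
    rwa [Fintype.sum_option] at this
  -- channel values
  have hW0 : ∀ x, necW h pZ x none = ε := by
    intro x; simp [necW, Fintype.sum_option, hε]
  have hWs : ∀ x b, necW h pZ x (some b) = pZ (some (ht x b)) := by
    intro x b
    have hiff : ∀ a, h x a = b ↔ a = ht x b := fun a =>
      ⟨fun e => (hS1 x).injective (by rw [e, hinv]), fun e => by rw [e, hinv]⟩
    simp only [necW, Fintype.sum_option, Option.map_none, Option.map_some,
      Option.some.injEq, hiff]
    simp
  -- bijections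
  have hbij1 : ∀ x, Function.Bijective (ht x) := by
    intro x
    refine Finite.injective_iff_bijective.mp (fun b b' e => ?_)
    have := congrArg (h x) e
    rwa [hinv, hinv] at this
  have hbij2 : ∀ b, Function.Bijective (fun x => ht x b) :=
    fun b => Finite.injective_iff_bijective.mp (hS2 b)
  have hre1 : ∀ (x : Fin q) (f : Fin q → ℝ), ∑ b, f (ht x b) = ∑ a, f a :=
    fun x f => Fintype.sum_bijective (ht x) (hbij1 x) _ _ (fun b => rfl)
  have hre2 : ∀ (b : Fin q) (f : Fin q → ℝ), ∑ x, f (ht x b) = ∑ a, f a :=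
    fun b f => Fintype.sum_bijective (fun x => ht x b) (hbij2 b) _ _ (fun x => rfl)
  set j := jointOf (fun _ : Fin q => (q : ℝ)⁻¹) (necW h pZ) with hj
  have hjval0 : ∀ x, j (x, none) = (q : ℝ)⁻¹ * ε := by
    intro x; simp [hj, jointOf, hW0]
  have hjvals : ∀ x b, j (x, some b) = (q : ℝ)⁻¹ * pZ (some (ht x b)) := by
    intro x b; simp [hj, jointOf, hWs]
  -- marginal 1
  have hm1 : ∀ x, marg1 j x = (q : ℝ)⁻¹ := by
    intro x
    rw [marg1, Fintype.sum_option]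
    simp only [hjval0, hjvals]
    rw [← Finset.mul_sum, hre1 x (fun a => pZ (some a)), ← hs, ← mul_add, hsum1, mul_one]
  have e1 : entropy (marg1 j) = L := by
    simp only [entropy, hm1]
    rw [Finset.sum_const, Finset.card_univ, Fintype.card_fin, nsmul_eq_mul]
    have := scale_negMulLog hq 1
    simpa using this
  -- marginal 2
  have hm20 : marg2 j none = ε := by
    simp only [marg2, hjval0]
    rw [Finset.sum_const, Finset.card_univ, Fintype.card_fin, nsmul_eq_mul]
    field_simp
  have hm2s : ∀ b, marg2 j (some b) = (q : ℝ)⁻¹ * s := by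
    intro b
    simp only [marg2, hjvals]
    rw [← Finset.mul_sum, hre2 b (fun a => pZ (some a))]
  have e2 : entropy (marg2 j) = Real.negMulLog ε + (Real.negMulLog s + s * L) := by
    rw [entropy, Fintype.sum_option, hm20]
    simp only [hm2s]
    rw [Finset.sum_const, Finset.card_univ, Fintype.card_fin, nsmul_eq_mul,
      scale_negMulLog hq s]
  -- joint entropy
  have e3 : entropy j
      = (Real.negMulLog ε + ε * L) + (T + s * L) := by
    rw [entropy, Fintype.sum_prod_type]
    have hx : ∀ x : Fin q, ∑ y, Real.negMulLog (j (x, y))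
        = Real.negMulLog ((q : ℝ)⁻¹ * ε)
          + ∑ a, Real.negMulLog ((q : ℝ)⁻¹ * pZ (some a)) := by
      intro x
      rw [Fintype.sum_option, hjval0]
      simp only [hjvals]
      rw [hre1 x (fun a => Real.negMulLog ((q : ℝ)⁻¹ * pZ (some a)))]
    simp only [hx]
    rw [Finset.sum_const, Finset.card_univ, Fintype.card_fin, nsmul_eq_mul,
      mul_add, scale_negMulLog hq ε, Finset.mul_sum]
    have : ∀ a : Fin q, (q : ℝ) * Real.negMulLog ((q : ℝ)⁻¹ * pZ (some a))
        = Real.negMulLog (pZ (some a)) + pZ (some a) * L :=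
      fun a => scale_negMulLog hq (pZ (some a))
    rw [Finset.sum_congr rfl (fun a _ => this a), Finset.sum_add_distrib,
      ← Finset.sum_mul, ← hs, ← hT]
  -- tilde entropies
  have e4 : entropy (jointTilde pZ) = Real.negMulLog ε + T := by
    rw [entropy, Fintype.sum_prod_type]
    rw [Fintype.sum_option]
    simp [jointTilde, hT, add_comm, hε]
  have e5 : entropy (marg2 (jointTilde pZ)) = Real.negMulLog ε + Real.negMulLog s := by
    rw [entropy, Fintype.sum_bool]
    have h1 : marg2 (jointTilde pZ) true = ε := by
      simp [marg2, jointTilde, Fintype.sum_option, hε]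
    have h2 : marg2 (jointTilde pZ) false = s := by
      simp [marg2, jointTilde, Fintype.sum_option, hs]
    rw [h1, h2]
  rw [mutInfoJ, e1, e2, e3, e4, e5]
  ring
end
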